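/- Symmetrizability plus the Kawashima condition imply steady invertibility: Let n ≥ 1 and let A, B, A⁰ ∈ ℝ^{n×n} be such that A⁰ is symmetric positive definite, A A⁰ is symmetric, and B A⁰ is symmetric positive semidefinite. Assume the Kawashima condition: no nonzero vector of ℂⁿ that is an eigenvector of A A⁰ (viewed as a complex matrix) lies in the kernel of B A⁰ (viewed as a complex matrix). Then for every ξ ∈ ℝ \ {0}, the complex matrix −ξ² B + iξ A : ℂⁿ → ℂⁿ is bijective. -/

import Mathlib

noncomputable section

open Matrix

open ComplexOrder in
private lemma psd_map_complex' {n : ℕ} {M : Matrix (Fin n) (Fin n) ℝ} (hM : M.PosSemidef) :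
    (M.map Complex.ofReal).PosSemidef := by
  obtain ⟨C, rfl⟩ : ∃ C : Matrix (Fin n) (Fin n) ℝ, M = Cᴴ * C := by
    open scoped MatrixOrder in
    obtain ⟨X, hX, -, hXX⟩ := CFC.exists_sqrt_of_isSelfAdjoint_of_quasispectrumRestricts
      hM.isHermitian (QuasispectrumRestricts.nnreal_of_nonneg hM.nonneg)
    exact ⟨X, by rw [← hXX, ← star_eq_conjTranspose, hX.star_eq]⟩
  have h : (Cᴴ * C).map Complex.ofReal = (C.map Complex.ofReal)ᴴ * (C.map Complex.ofReal) := by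
    rw [show (Cᴴ * C).map Complex.ofReal
        = Cᴴ.map Complex.ofReal * C.map Complex.ofReal by
      ext i j; simp [Matrix.map_apply, Matrix.mul_apply],
      Matrix.conjTranspose_map]
    intro a; simp
  rw [h]
  exact Matrix.posSemidef_conjTranspose_mul_self _

open ComplexOrder in
theorem symmetrizable_kawashima_invertibility
    (n : ℕ) (hn : 1 ≤ n) (A B A0 : Matrix (Fin n) (Fin n) ℝ)
    (hA0 : A0.PosDef)
    (hAA0 : (A * A0).IsSymm)
    (hBA0 : (B * A0).PosSemidef)
    (hKaw : ∀ (x : Fin n → ℂ) (μ : ℂ), x ≠ 0 →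
      (A * A0).map Complex.ofReal *ᵥ x = μ • x →
      (B * A0).map Complex.ofReal *ᵥ x ≠ 0) :
    ∀ ξ : ℝ, ξ ≠ 0 →
      Function.Bijective (fun x : Fin n → ℂ =>
        ((-(ξ : ℂ) ^ 2) • B.map Complex.ofReal
          + ((ξ : ℂ) * Complex.I) • A.map Complex.ofReal) *ᵥ x) := by
  intro ξ hξ
  set A' := A.map Complex.ofReal
  set B' := B.map Complex.ofReal
  set A0' := A0.map Complex.ofReal with hA0'def
  set M : Matrix (Fin n) (Fin n) ℂ := (-(ξ : ℂ) ^ 2) • B' + ((ξ : ℂ) * Complex.I) • A' with hMdef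
  set K' := (B * A0).map Complex.ofReal with hK'def
  set S' := (A * A0).map Complex.ofReal with hS'def
  -- complexified matrices
  have hK' : K'.PosSemidef := psd_map_complex' hBA0
  have hS'herm : S'.IsHermitian := by
    rw [Matrix.IsHermitian, hS'def, ← Matrix.conjTranspose_map]
    · rw [show (A * A0)ᴴ = A * A0 from hAA0]
    · intro a; simp
  -- invertibility of A0'
  have hdet : IsUnit A0'.det := by
    have h1 : A0'.det = Complex.ofReal A0.det := by
      rw [hA0'def, show A0.map Complex.ofReal = Complex.ofRealHom.mapMatrix A0 from rfl,
        ← RingHom.map_det]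
      rfl
    rw [h1]
    simp only [isUnit_iff_ne_zero, ne_eq, Complex.ofReal_eq_zero]
    exact hA0.det_pos.ne'
  -- core: kernel of M is trivial
  have core : ∀ x : Fin n → ℂ, M *ᵥ x = 0 → x = 0 := by
    intro x hx
    by_contra hx0
    set y : Fin n → ℂ := A0'⁻¹ *ᵥ x with hydef
    have hxy : A0' *ᵥ y = x := by
      rw [hydef, Matrix.mulVec_mulVec, Matrix.mul_nonsing_inv _ hdet, Matrix.one_mulVec]
    have hy0 : y ≠ 0 := by
      intro h
      apply hx0
      rw [← hxy, h, Matrix.mulVec_zero]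
    -- vector equation
    have heq : (-(ξ : ℂ) ^ 2) • (K' *ᵥ y) + ((ξ : ℂ) * Complex.I) • (S' *ᵥ y) = 0 := by
      have h1 : M *ᵥ (A0' *ᵥ y) = 0 := by rw [hxy]; exact hx
      rw [Matrix.mulVec_mulVec] at h1
      have h2 : M * A0' = (-(ξ : ℂ) ^ 2) • K' + ((ξ : ℂ) * Complex.I) • S' := by
        rw [hMdef, Matrix.add_mul, Matrix.smul_mul, Matrix.smul_mul, hK'def, hS'def]
        congr 1
        · congr 1
          ext i j; simp [Matrix.map_apply, Matrix.mul_apply, A', B', A0']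
        · congr 1
          ext i j; simp [Matrix.map_apply, Matrix.mul_apply, A', B', A0']
      rw [h2, Matrix.add_mulVec, Matrix.smul_mulVec, Matrix.smul_mulVec] at h1
      exact h1
    -- scalar equation
    set q : ℂ := star y ⬝ᵥ (K' *ᵥ y) with hqdef
    set s : ℂ := star y ⬝ᵥ (S' *ᵥ y) with hsdef
    have hscal : (-(ξ : ℂ) ^ 2) * q + ((ξ : ℂ) * Complex.I) * s = 0 := by
      have := congrArg (fun v => star y ⬝ᵥ v) heq
      simpa [dotProduct_add, dotProduct_smul, smul_eq_mul] using this
    have hq_nonneg : 0 ≤ q.re ∧ q.im = 0 := by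
      have := hK'.dotProduct_mulVec_nonneg y
      rw [Complex.nonneg_iff] at this
      exact ⟨this.1, this.2.symm⟩
    have hs_im : s.im = 0 := by
      have h1 : s = star s := by
        conv_lhs => rw [hsdef, Matrix.star_dotProduct]
        congr 1
        rw [Matrix.star_mulVec, hS'herm.eq, ← Matrix.dotProduct_mulVec]
      have := congrArg Complex.im h1
      simp only [Complex.star_def, Complex.conj_im] at this
      linarith
    -- real part of scalar equation gives q = 0
    have hq0 : q = 0 := by
      have hre := congrArg Complex.re hscal
      simp only [pow_two, Complex.add_re, Complex.neg_re, Complex.mul_re, Complex.mul_im,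
        Complex.neg_im, Complex.I_re, Complex.I_im, Complex.ofReal_re, Complex.ofReal_im,
        Complex.zero_re, hq_nonneg.2, hs_im] at hre
      have hξsq : (0:ℝ) < ξ * ξ := mul_self_pos.mpr hξ
      have hqre : q.re = 0 := by nlinarith [hq_nonneg.1]
      exact Complex.ext hqre hq_nonneg.2
    have hKy : K' *ᵥ y = 0 := (hK'.dotProduct_mulVec_zero_iff y).mp hq0
    have hSy : S' *ᵥ y = 0 := by
      rw [hKy, smul_zero, zero_add] at heq
      rcases smul_eq_zero.mp heq with h | h
      · exfalso
        apply hξ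
        have := mul_eq_zero.mp h
        rcases this with h' | h'
        · exact_mod_cast h'
        · exact absurd h' Complex.I_ne_zero
      · exact h
    exact hKaw y 0 hy0 (by rw [hSy, zero_smul]) hKy
  -- conclude bijectivity
  have hinj : Function.Injective M.mulVec := by
    intro a b hab
    have h1 : M *ᵥ (a - b) = 0 := by
      rw [Matrix.mulVec_sub, hab, sub_self]
    exact sub_eq_zero.mp (core _ h1)
  exact ⟨hinj, Matrix.mulVec_surjective_iff_isUnit.mpr
    (Matrix.mulVec_injective_iff_isUnit.mp hinj)⟩
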